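/- For every irrational x ∈ (0,1), the denominators of the principal convergents of the odd-odd continued fraction of x are strictly increasing: q_0 = 1 and q_{n+1} > q_n ≥ 1 for every n ≥ 0. Consequently q_n → ∞ as n → ∞. -/

import Mathlib

/-- The odd-odd continued fraction map on `[0,1]`.  For `x ∈ [(k-1)/k, k/(k+1))` with `k ≥ 1`
one has `k = ⌊1/(1-x)⌋`, and the two branches are separated by `(2k-1)/(2k+1)`. -/
noncomputable def oocfT (x : ℝ) : ℝ :=
  if x = 1 then 1
  else if x < (2 * (⌊1 / (1 - x)⌋ : ℝ) - 1) / (2 * (⌊1 / (1 - x)⌋ : ℝ) + 1) then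
    ((⌊1 / (1 - x)⌋ : ℝ) * x - ((⌊1 / (1 - x)⌋ : ℝ) - 1)) /
      ((⌊1 / (1 - x)⌋ : ℝ) - ((⌊1 / (1 - x)⌋ : ℝ) + 1) * x)
  else
    ((⌊1 / (1 - x)⌋ : ℝ) - ((⌊1 / (1 - x)⌋ : ℝ) + 1) * x) /
      ((⌊1 / (1 - x)⌋ : ℝ) * x - ((⌊1 / (1 - x)⌋ : ℝ) - 1))

/-- OOCF partial quotient `a` of a point `y`: `a = k+1` if `y` is in the lower branch
interval `((k-1)/k, (2k-1)/(2k+1))`, and `a = k` if `y ∈ ((2k-1)/(2k+1), k/(k+1))`,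
where `k = ⌊1/(1-y)⌋`. -/
noncomputable def oocfA (y : ℝ) : ℤ :=
  if y < (2 * (⌊1 / (1 - y)⌋ : ℝ) - 1) / (2 * (⌊1 / (1 - y)⌋ : ℝ) + 1) then ⌊1 / (1 - y)⌋ + 1
  else ⌊1 / (1 - y)⌋

/-- OOCF partial quotient `ε` of a point `y`: `ε = -1` on the lower branch interval and
`ε = 1` on the upper one. -/
noncomputable def oocfE (y : ℝ) : ℤ :=
  if y < (2 * (⌊1 / (1 - y)⌋ : ℝ) - 1) / (2 * (⌊1 / (1 - y)⌋ : ℝ) + 1) then -1 else 1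

/-- The OOCF convergents `(p'_n, q'_n, p_n, q_n)` of `x`, defined by
`p'_0 = 1, q'_0 = 0, p_0 = 1, q_0 = 1` and
`p'_n = a_n p_{n-1} - p'_{n-1}`, `q'_n = a_n q_{n-1} - q'_{n-1}`,
`p_n = 2 p'_n + ε_n p_{n-1}`, `q_n = 2 q'_n + ε_n q_{n-1}`,
where `(a_n, ε_n)` are the partial quotients of `x`, i.e. `a_n = oocfA (oocfT^[n-1] x)`,
`ε_n = oocfE (oocfT^[n-1] x)`. -/
noncomputable def oocfConv (x : ℝ) : ℕ → ℤ × ℤ × ℤ × ℤ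
  | 0 => (1, 0, 1, 1)
  | n + 1 =>
    let c := oocfConv x n
    (oocfA (oocfT^[n] x) * c.2.2.1 - c.1,
     oocfA (oocfT^[n] x) * c.2.2.2 - c.2.1,
     2 * (oocfA (oocfT^[n] x) * c.2.2.1 - c.1) + oocfE (oocfT^[n] x) * c.2.2.1,
     2 * (oocfA (oocfT^[n] x) * c.2.2.2 - c.2.1) + oocfE (oocfT^[n] x) * c.2.2.2)

/-- `n`-th sub-convergent numerator `p'_n`. -/
noncomputable def oocfP' (x : ℝ) (n : ℕ) : ℤ := (oocfConv x n).1

/-- `n`-th sub-convergent denominator `q'_n`. -/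
noncomputable def oocfQ' (x : ℝ) (n : ℕ) : ℤ := (oocfConv x n).2.1

/-- `n`-th principal convergent numerator `p_n`. -/
noncomputable def oocfP (x : ℝ) (n : ℕ) : ℤ := (oocfConv x n).2.2.1

/-- `n`-th principal convergent denominator `q_n`. -/
noncomputable def oocfQ (x : ℝ) (n : ℕ) : ℤ := (oocfConv x n).2.2.2

/-- `n`-th pseudo-convergent numerator: `p''_n = p'_n + ε_n p_{n-1}` for `n ≥ 1`
(with the convention `p''_0 = 0`). -/
noncomputable def oocfP'' (x : ℝ) : ℕ → ℤ
  | 0 => 0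
  | n + 1 => oocfP' x (n + 1) + oocfE (oocfT^[n] x) * oocfP x n

/-- `n`-th pseudo-convergent denominator: `q''_n = q'_n + ε_n q_{n-1}` for `n ≥ 1`
(with the convention `q''_0 = 1`). -/
noncomputable def oocfQ'' (x : ℝ) : ℕ → ℤ
  | 0 => 1
  | n + 1 => oocfQ' x (n + 1) + oocfE (oocfT^[n] x) * oocfQ x n

lemma oocf_key (y : ℝ) (hy : y ∈ Set.Ioo (0:ℝ) 1) (hirr : Irrational y) :
    (oocfT y ∈ Set.Ioo (0:ℝ) 1 ∧ Irrational (oocfT y)) ∧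
    1 ≤ oocfA y ∧ (oocfE y = 1 ∨ oocfE y = -1) ∧
    (oocfE y = -1 → 2 ≤ oocfA y) := by
  obtain ⟨hy0, hy1⟩ := hy
  have h1y : (0:ℝ) < 1 - y := by linarith
  set k : ℤ := ⌊1 / (1 - y)⌋ with hkdef
  have hk1 : 1 ≤ k := by
    rw [hkdef]
    apply Int.le_floor.mpr
    rw [le_div_iff₀ h1y]; push_cast; linarith
  have hkR : (1:ℝ) ≤ (k:ℝ) := by exact_mod_cast hk1
  have hfl : (k:ℝ) ≤ 1/(1-y) := by rw [hkdef]; exact Int.floor_le _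
  have hfu : 1/(1-y) < (k:ℝ) + 1 := by
    rw [hkdef]; exact Int.lt_floor_add_one _
  have hne : (k:ℝ) ≠ 1/(1-y) := by
    intro h
    apply hirr
    have hk0 : ((k:ℚ):ℝ) ≠ 0 := by push_cast; linarith
    refine ⟨1 - 1/(k:ℚ), ?_⟩
    have hy' : (1 - y) * (k:ℝ) = 1 := by
      field_simp at h
      linarith [h]
    push_cast
    have : (k:ℝ) ≠ 0 := by linarith
    field_simp
    nlinarith [hy']
  have hfl' : (k:ℝ) < 1/(1-y) := lt_of_le_of_ne hfl hne
  have hnum : 0 < (k:ℝ)*y - ((k:ℝ)-1) := by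
    have h := (lt_div_iff₀ h1y).mp hfl'
    nlinarith
  have hden : 0 < (k:ℝ) - ((k:ℝ)+1)*y := by
    have h := (div_lt_iff₀ h1y).mp hfu
    nlinarith
  have h2k1 : (0:ℝ) < 2*(k:ℝ)+1 := by linarith
  have hcne : y ≠ (2*(k:ℝ)-1)/(2*(k:ℝ)+1) := by
    intro h
    apply hirr
    refine ⟨(2*(k:ℚ)-1)/(2*(k:ℚ)+1), ?_⟩
    push_cast
    exact h.symm
  rcases lt_or_gt_of_ne hcne with hlt | hgt
  · -- lower branch
    have hT : oocfT y = ((k:ℝ)*y - ((k:ℝ)-1)) / ((k:ℝ) - ((k:ℝ)+1)*y) := by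
      rw [oocfT, if_neg (ne_of_lt hy1), ← hkdef, if_pos hlt]
    have hA : oocfA y = k + 1 := by rw [oocfA, ← hkdef, if_pos hlt]
    have hE : oocfE y = -1 := by rw [oocfE, ← hkdef, if_pos hlt]
    have hylt : y * (2*(k:ℝ)+1) < 2*(k:ℝ)-1 := (lt_div_iff₀ h2k1).mp hlt
    have hTpos : 0 < oocfT y := by rw [hT]; exact div_pos hnum hden
    have hTlt : oocfT y < 1 := by
      rw [hT, div_lt_one hden]; nlinarith
    refine ⟨⟨⟨hTpos, hTlt⟩, ?_⟩, by omega, Or.inr hE, fun _ => by omega⟩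
    rw [hT]
    rintro ⟨q, hq⟩
    have hq' : (q:ℝ) * ((k:ℝ) - ((k:ℝ)+1)*y) = (k:ℝ)*y - ((k:ℝ)-1) := by
      rw [hq, div_mul_cancel₀ _ (ne_of_gt hden)]
    have hqpos : (0:ℝ) < q := by
      rw [hq]; exact div_pos hnum hden
    have hD : (0:ℝ) < (k:ℝ) + (q:ℝ)*((k:ℝ)+1) := by nlinarith
    have hyeq : y * ((k:ℝ) + (q:ℝ)*((k:ℝ)+1)) = (q:ℝ)*(k:ℝ) + (k:ℝ) - 1 := by
      linear_combination -hq'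
    apply hirr
    refine ⟨(q*(k:ℚ) + (k:ℚ) - 1)/((k:ℚ) + q*((k:ℚ)+1)), ?_⟩
    push_cast
    rw [div_eq_iff (ne_of_gt hD)]
    linear_combination -hyeq
  · -- upper branch
    have hnlt : ¬ y < (2*(k:ℝ)-1)/(2*(k:ℝ)+1) := not_lt.mpr (le_of_lt hgt)
    have hT : oocfT y = ((k:ℝ) - ((k:ℝ)+1)*y) / ((k:ℝ)*y - ((k:ℝ)-1)) := by
      rw [oocfT, if_neg (ne_of_lt hy1), ← hkdef, if_neg hnlt]
    have hA : oocfA y = k := by rw [oocfA, ← hkdef, if_neg hnlt]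
    have hE : oocfE y = 1 := by rw [oocfE, ← hkdef, if_neg hnlt]
    have hygt : 2*(k:ℝ)-1 < y * (2*(k:ℝ)+1) := (div_lt_iff₀ h2k1).mp hgt
    have hTpos : 0 < oocfT y := by rw [hT]; exact div_pos hden hnum
    have hTlt : oocfT y < 1 := by
      rw [hT, div_lt_one hnum]; nlinarith
    refine ⟨⟨⟨hTpos, hTlt⟩, ?_⟩, by omega, Or.inl hE, fun h => by rw [hE] at h; exact absurd h (by norm_num)⟩
    rw [hT]
    rintro ⟨q, hq⟩
    have hq' : (q:ℝ) * ((k:ℝ)*y - ((k:ℝ)-1)) = (k:ℝ) - ((k:ℝ)+1)*y := by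
      rw [hq, div_mul_cancel₀ _ (ne_of_gt hnum)]
    have hqpos : (0:ℝ) < q := by
      rw [hq]; exact div_pos hden hnum
    have hD : (0:ℝ) < (q:ℝ)*(k:ℝ) + (k:ℝ) + 1 := by nlinarith
    have hyeq : y * ((q:ℝ)*(k:ℝ) + (k:ℝ) + 1) = (q:ℝ)*((k:ℝ)-1) + (k:ℝ) := by
      linear_combination hq'
    apply hirr
    refine ⟨(q*((k:ℚ)-1) + (k:ℚ))/(q*(k:ℚ) + (k:ℚ) + 1), ?_⟩
    push_cast
    rw [div_eq_iff (ne_of_gt hD)]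
    linear_combination -hyeq

lemma oocfQ'_succ (x : ℝ) (n : ℕ) :
    oocfQ' x (n+1) = oocfA (oocfT^[n] x) * oocfQ x n - oocfQ' x n := rfl

lemma oocfQ_succ (x : ℝ) (n : ℕ) :
    oocfQ x (n+1) = 2*(oocfA (oocfT^[n] x) * oocfQ x n - oocfQ' x n)
      + oocfE (oocfT^[n] x) * oocfQ x n := rfl

/-- For irrational `x ∈ (0,1)`, the denominators of the OOCF principal convergents
satisfy `q_0 = 1`, `1 ≤ q_n < q_{n+1}` for all `n`, and `q_n → ∞`. -/
theorem oocf_denominators_strict_mono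
    (x : ℝ) (hx : x ∈ Set.Ioo (0 : ℝ) 1) (hirr : Irrational x) :
    oocfQ x 0 = 1 ∧ (∀ n : ℕ, 1 ≤ oocfQ x n ∧ oocfQ x n < oocfQ x (n + 1)) ∧
      Filter.Tendsto (fun n => oocfQ x n) Filter.atTop Filter.atTop := by
  have hiter : ∀ n, oocfT^[n] x ∈ Set.Ioo (0:ℝ) 1 ∧ Irrational (oocfT^[n] x) := by
    intro n; induction n with
    | zero => exact ⟨hx, hirr⟩
    | succ n ih =>
      rw [Function.iterate_succ_apply']
      exact (oocf_key _ ih.1 ih.2).1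
  have key : ∀ n, 0 ≤ oocfQ' x n ∧ oocfQ' x n < oocfQ x n := by
    intro n; induction n with
    | zero => exact ⟨le_refl 0, by norm_num [oocfQ', oocfQ, oocfConv]⟩
    | succ n ih =>
      obtain ⟨h1, h2⟩ := ih
      obtain ⟨-, ha, he, hea⟩ := oocf_key _ (hiter n).1 (hiter n).2
      rw [oocfQ'_succ, oocfQ_succ]
      set a := oocfA (oocfT^[n] x) with hadef
      set e := oocfE (oocfT^[n] x) with hedef
      rcases he with he | he
      · rw [he]; constructor <;> nlinarith
      · have ha2 : 2 ≤ a := hea he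
        rw [he]; constructor <;> nlinarith
  have mono : ∀ n, 1 ≤ oocfQ x n ∧ oocfQ x n < oocfQ x (n+1) := by
    intro n
    obtain ⟨h1, h2⟩ := key n
    obtain ⟨-, ha, he, hea⟩ := oocf_key _ (hiter n).1 (hiter n).2
    refine ⟨by linarith, ?_⟩
    rw [oocfQ_succ]
    set a := oocfA (oocfT^[n] x) with hadef
    set e := oocfE (oocfT^[n] x) with hedef
    rcases he with he | he
    · rw [he]; nlinarith
    · have ha2 : 2 ≤ a := hea he
      rw [he]; nlinarith
  refine ⟨rfl, mono, ?_⟩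
  have hge : ∀ n : ℕ, (n:ℤ) + 1 ≤ oocfQ x n := by
    intro n; induction n with
    | zero => simp [(mono 0).1]
    | succ n ih =>
      have := (mono n).2
      push_cast
      omega
  exact Filter.tendsto_atTop_mono hge
    (Filter.tendsto_atTop_add_const_right _ 1 tendsto_natCast_atTop_atTop)
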